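/- arXiv:1606.08417 — 2 statements merged into one kernel-verified Lean document; each statement's English description precedes it below -/
import Mathlib

section
/- Let d ≥ 1, γ ∈ (0,1) and λ ∈ (0,1]. There exist constants h₀ = h₀(d) > 0 and C = C(d,γ,λ) with the following property: for every h ∈ (0,h₀] and every (h,λ)-net G ⊆ ℝ^d there exists a map E from bounded real-valued functions on G to bounded continuous functions on ℝ^d such that: (i) E is linear; (ii) E is monotone, i.e. if g₁ ≤ g₂ on G then E(g₁) ≤ E(g₂) on ℝ^d; (iii) E(g)(x) = g(x) for every x ∈ G; (iv) for every u ∈ C^{0,γ}_b(ℝ^d), ‖E(u|_G)‖_{C^{0,γ}} ≤ C·‖u‖_{C^{0,γ}}; and (v) for every bounded C¹ function u : ℝ^d → ℝ with bounded gradient, ‖E(u|_G) − u‖_{C^{0,γ}} ≤ C · h^{1−γ} · ( sup|u| + sup|∇u| ). -/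
open Metric Set
open scoped ENNReal NNReal

noncomputable section

abbrev Euc (d : ℕ) := EuclideanSpace ℝ (Fin d)

variable {d : ℕ}

def supNorm (u : Euc d → ℝ) : ℝ := ⨆ x, |u x|

def gradSup (u : Euc d → ℝ) : ℝ := ⨆ x, ‖fderiv ℝ u x‖

/-- `γ`-Hölder seminorm -/
def holderSemi (γ : ℝ) (u : Euc d → ℝ) : ℝ :=
  sInf {M : ℝ | 0 ≤ M ∧ ∀ x y, |u x - u y| ≤ M * ‖x - y‖ ^ γ}

/-- the `C^{0,γ}` norm : `sup|u| + [u]_γ` -/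
def holderNorm (γ : ℝ) (u : Euc d → ℝ) : ℝ := supNorm u + holderSemi γ u

/-- membership in `C^{0,γ}_b(ℝ^d)` -/
def IsHolderB (γ : ℝ) (u : Euc d → ℝ) : Prop :=
  (∃ M : ℝ, ∀ x, |u x| ≤ M) ∧ ∃ M : ℝ, ∀ x y, |u x - u y| ≤ M * ‖x - y‖ ^ γ

def IsCb (f : Euc d → ℝ) : Prop := Continuous f ∧ ∃ M : ℝ, ∀ x, |f x| ≤ M

/-- `G` is an `(h, lam)`-net : `h`-dense and with distinct points `lam·h`-separated -/
def IsNet (h lam : ℝ) (G : Set (Euc d)) : Prop :=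
  G.Nonempty ∧ (∀ x : Euc d, Metric.infDist x G ≤ h) ∧
    ∀ x ∈ G, ∀ y ∈ G, x ≠ y → lam * h ≤ dist x y

/-- boundedness of a function on the subtype `G` -/
def BddFun {G : Set (Euc d)} (g : G → ℝ) : Prop := ∃ M : ℝ, ∀ p, |g p| ≤ M

namespace MHE

/-- bump of height 1 at `p`, support radius `lam*h/4` -/
def bf (lam h : ℝ) (p x : Euc d) : ℝ := max 0 (1 - 4 * dist x p / (lam * h))

/-- tent weight of height `2h`, support radius `2h` -/
def wf (h : ℝ) (p x : Euc d) : ℝ := max 0 (2 * h - dist x p)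

variable {h lam : ℝ} {G : Set (Euc d)}

lemma bf_nonneg (p x : Euc d) : 0 ≤ bf lam h p x := le_max_left _ _
lemma wf_nonneg (p x : Euc d) : 0 ≤ wf h p x := le_max_left _ _
lemma bf_le_one (hl : 0 < lam) (hh : 0 < h) (p x : Euc d) : bf lam h p x ≤ 1 := by
  have := dist_nonneg (x := x) (y := p)
  have h4 : 0 ≤ 4 * dist x p / (lam * h) := by positivity
  unfold bf; apply max_le <;> linarith
lemma wf_le (hh : 0 < h) (p x : Euc d) : wf h p x ≤ 2 * h := by
  have := dist_nonneg (x := x) (y := p)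
  unfold wf; apply max_le <;> linarith

lemma bf_supp (hl : 0 < lam) (hh : 0 < h) {p x : Euc d} (hb : bf lam h p x ≠ 0) :
    dist x p ≤ lam * h / 4 := by
  by_contra hd
  push_neg at hd
  apply hb
  have hlh : 0 < lam * h := by positivity
  have : 1 - 4 * dist x p / (lam * h) ≤ 0 := by
    rw [sub_nonpos, le_div_iff₀ hlh]; nlinarith
  exact max_eq_left this

lemma wf_supp {p x : Euc d} (hw : wf h p x ≠ 0) : dist x p ≤ 2 * h := by
  by_contra hd
  push_neg at hd
  exact hw (max_eq_left (by linarith))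

lemma bf_eq_zero (hl : 0 < lam) (hh : 0 < h) {p x : Euc d} (hd : lam * h / 4 < dist x p) :
    bf lam h p x = 0 := by
  by_contra hb; exact absurd (bf_supp hl hh hb) (not_le.mpr hd)

lemma wf_eq_zero {p x : Euc d} (hd : 2 * h < dist x p) : wf h p x = 0 := by
  by_contra hw; exact absurd (wf_supp hw) (not_le.mpr hd)

lemma wf_lip (p x y : Euc d) : |wf h p x - wf h p y| ≤ dist x y := by
  unfold wf
  rw [max_comm 0 _, max_comm 0 _]
  refine (abs_max_sub_max_le_abs _ _ _).trans ?_
  have : 2 * h - dist x p - (2 * h - dist y p) = -(dist x p - dist y p) := by ring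
  rw [this, abs_neg]
  exact abs_dist_sub_le _ _ _

lemma bf_lip (hl : 0 < lam) (hh : 0 < h) (p x y : Euc d) :
    |bf lam h p x - bf lam h p y| ≤ 4 / (lam * h) * dist x y := by
  unfold bf
  rw [max_comm 0 _, max_comm 0 _]
  refine (abs_max_sub_max_le_abs _ _ _).trans ?_
  have hlh : 0 < lam * h := by positivity
  have : 1 - 4 * dist x p / (lam * h) - (1 - 4 * dist y p / (lam * h))
      = -(4 / (lam * h) * (dist x p - dist y p)) := by field_simp; ring
  rw [this, abs_neg, abs_mul, abs_of_pos (by positivity)]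
  exact mul_le_mul_of_nonneg_left (abs_dist_sub_le _ _ _) (by positivity)

/-- packing bound: any finset of `G` within distance `R` of `x` has controlled cardinality. -/
lemma packing (hh : 0 < h) (hl : 0 < lam)
    (hsep : ∀ x ∈ G, ∀ y ∈ G, x ≠ y → lam * h ≤ dist x y)
    (x : Euc d) {R : ℝ} (hR : 0 ≤ R) (F : Finset (Euc d)) (hFG : ∀ p ∈ F, p ∈ G)
    (hFx : ∀ p ∈ F, dist x p ≤ R) :
    (F.card : ℝ) * (lam * h / 2) ^ d ≤ (R + lam * h / 2) ^ d := by
  classical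
  set r : ℝ := lam * h / 2 with hr_def
  have hr : 0 < r := by positivity
  have hdisj : (F : Set (Euc d)).PairwiseDisjoint fun p => ball p r := by
    intro p hp q hq hpq
    exact ball_disjoint_ball (by
      have := hsep p (hFG p hp) q (hFG q hq) hpq
      simp only [hr_def]; linarith)
  have hsub : ∀ p ∈ F, ball p r ⊆ ball x (R + r) := by
    intro p hp z hz
    rw [mem_ball] at hz ⊢
    have := hFx p hp
    calc dist z x ≤ dist z p + dist p x := dist_triangle _ _ _
      _ < r + R := by rw [dist_comm p x]; linarith
      _ = R + r := by ring
  have hmeas := MeasureTheory.measure_biUnion_finset (μ := MeasureTheory.volume) hdisj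
    (fun p _ => measurableSet_ball)
  have hle : ∑ p ∈ F, MeasureTheory.volume (ball p r)
      ≤ MeasureTheory.volume (ball x (R + r)) := by
    rw [← hmeas]
    exact MeasureTheory.measure_mono (Set.iUnion₂_subset hsub)
  have hballEq : ∀ p : Euc d, MeasureTheory.volume (ball p r)
      = ENNReal.ofReal (r ^ d) * MeasureTheory.volume (ball (0 : Euc d) 1) := by
    intro p
    rw [MeasureTheory.Measure.addHaar_ball_of_pos _ _ hr, finrank_euclideanSpace_fin]
  have hbigEq : MeasureTheory.volume (ball x (R + r))
      = ENNReal.ofReal ((R + r) ^ d) * MeasureTheory.volume (ball (0 : Euc d) 1) := by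
    rw [MeasureTheory.Measure.addHaar_ball_of_pos _ _ (by positivity), finrank_euclideanSpace_fin]
  rw [Finset.sum_congr rfl (fun p _ => hballEq p), Finset.sum_const, hbigEq, nsmul_eq_mul,
    ← mul_assoc] at hle
  have hpos : MeasureTheory.volume (ball (0 : Euc d) 1) ≠ 0 :=
    (measure_ball_pos _ _ one_pos).ne'
  have htop : MeasureTheory.volume (ball (0 : Euc d) 1) ≠ ⊤ :=
    (MeasureTheory.measure_ball_lt_top).ne
  have hle2 : (F.card : ℝ≥0∞) * ENNReal.ofReal (r ^ d) ≤ ENNReal.ofReal ((R + r) ^ d) :=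
    (ENNReal.mul_le_mul_iff_left hpos htop).mp hle
  have hle3 : (F.card : ℝ≥0∞) * ENNReal.ofReal (r ^ d)
      = ENNReal.ofReal ((F.card : ℝ) * r ^ d) := by
    rw [ENNReal.ofReal_mul (by positivity)]
    congr 1
    exact (ENNReal.ofReal_natCast _).symm
  rw [hle3] at hle2
  exact (ENNReal.ofReal_le_ofReal_iff (by positivity)).mp hle2

lemma finite_ball (hh : 0 < h) (hl : 0 < lam)
    (hsep : ∀ x ∈ G, ∀ y ∈ G, x ≠ y → lam * h ≤ dist x y)
    (x : Euc d) {R : ℝ} (hR : 0 ≤ R) :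
    {p : Euc d | p ∈ G ∧ dist x p ≤ R}.Finite := by
  classical
  by_contra hinf
  have hinf : {p : Euc d | p ∈ G ∧ dist x p ≤ R}.Infinite := hinf
  set r : ℝ := lam * h / 2 with hr_def
  have hr : 0 < r := by positivity
  obtain ⟨t, hts, hcard⟩ := hinf.exists_subset_card_eq (⌈(R + r) ^ d / r ^ d⌉₊ + 1)
  have hpack := packing hh hl hsep x hR t (fun p hp => (hts hp).1) (fun p hp => (hts hp).2)
  rw [hcard] at hpack
  have h1 : ((⌈(R + r) ^ d / r ^ d⌉₊ + 1 : ℕ) : ℝ) ≤ (R + r) ^ d / r ^ d := by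
    rw [le_div_iff₀ (by positivity)]
    exact_mod_cast hpack
  have h2 : (R + r) ^ d / r ^ d ≤ (⌈(R + r) ^ d / r ^ d⌉₊ : ℝ) := Nat.le_ceil _
  push_cast at h1
  linarith

lemma finite_ballG (hh : 0 < h) (hl : 0 < lam)
    (hsep : ∀ x ∈ G, ∀ y ∈ G, x ≠ y → lam * h ≤ dist x y)
    (x : Euc d) {R : ℝ} (hR : 0 ≤ R) :
    {p : ↥G | dist x ↑p ≤ R}.Finite := by
  have hfin := finite_ball hh hl hsep x hR
  have : {p : ↥G | dist x ↑p ≤ R} ⊆ Subtype.val ⁻¹' {p : Euc d | p ∈ G ∧ dist x p ≤ R} := by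
    intro p hp; exact ⟨p.2, hp⟩
  exact Set.Finite.subset (hfin.preimage (Subtype.val_injective.injOn)) this

lemma cardG (hh : 0 < h) (hl : 0 < lam) (hl1 : lam ≤ 1)
    (hsep : ∀ x ∈ G, ∀ y ∈ G, x ≠ y → lam * h ≤ dist x y)
    (x : Euc d) (T : Finset ↥G) (hT : ∀ p ∈ T, dist x ↑p ≤ 3 * h) :
    (T.card : ℝ) ≤ (7 / lam) ^ d := by
  classical
  set F : Finset (Euc d) := T.image Subtype.val with hF
  have hcard : F.card = T.card := Finset.card_image_of_injective T Subtype.val_injective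
  have hpack := packing hh hl hsep x (R := 3 * h) (by positivity) F
    (fun p hp => by
      obtain ⟨q, hq, rfl⟩ := Finset.mem_image.mp hp; exact q.2)
    (fun p hp => by
      obtain ⟨q, hq, rfl⟩ := Finset.mem_image.mp hp; exact hT q hq)
  rw [hcard] at hpack
  have hkey : (3 * h + lam * h / 2) ^ d ≤ (7 / lam) ^ d * (lam * h / 2) ^ d := by
    rw [← mul_pow]
    apply pow_le_pow_left₀ (by positivity)
    rw [div_mul_eq_mul_div, le_div_iff₀ hl]
    nlinarith [mul_le_mul_of_nonneg_right (mul_le_one₀ hl1 hl.le hl1 : lam * lam ≤ 1) hh.le]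
  have hrpos : (0:ℝ) < (lam * h / 2) ^ d := by positivity
  have := hpack.trans hkey
  exact le_of_mul_le_mul_right this hrpos

def Sf (h : ℝ) (G : Set (Euc d)) (x : Euc d) : ℝ := ∑ᶠ p : ↥G, wf h ↑p x
def Bs (lam h : ℝ) (G : Set (Euc d)) (x : Euc d) : ℝ := ∑ᶠ p : ↥G, bf lam h ↑p x
def af (lam h : ℝ) (G : Set (Euc d)) (p : ↥G) (x : Euc d) : ℝ :=
  bf lam h ↑p x + (1 - Bs lam h G x) * (wf h ↑p x / Sf h G x)
def ext (lam h : ℝ) (G : Set (Euc d)) (g : ↥G → ℝ) (x : Euc d) : ℝ :=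
  ∑ᶠ p : ↥G, g p * af lam h G p x

lemma supp_w_fin (hh : 0 < h) (hl : 0 < lam)
    (hsep : ∀ x ∈ G, ∀ y ∈ G, x ≠ y → lam * h ≤ dist x y) (x : Euc d) :
    (Function.support fun p : ↥G => wf h ↑p x).Finite :=
  Set.Finite.subset (finite_ballG hh hl hsep x (R := 2 * h) (by positivity))
    (fun p hp => wf_supp hp)

lemma supp_b_fin (hh : 0 < h) (hl : 0 < lam) (hl1 : lam ≤ 1)
    (hsep : ∀ x ∈ G, ∀ y ∈ G, x ≠ y → lam * h ≤ dist x y) (x : Euc d) :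
    (Function.support fun p : ↥G => bf lam h ↑p x).Finite :=
  Set.Finite.subset (finite_ballG hh hl hsep x (R := 2 * h) (by positivity))
    (fun p hp => (bf_supp hl hh hp).trans (by nlinarith))

lemma Sf_pos (hh : 0 < h) (hl : 0 < lam)
    (hsep : ∀ x ∈ G, ∀ y ∈ G, x ≠ y → lam * h ≤ dist x y)
    (hne : G.Nonempty) (hdense : ∀ x : Euc d, Metric.infDist x G ≤ h) (x : Euc d) :
    h / 2 ≤ Sf h G x := by
  classical
  obtain ⟨p, hpG, hp⟩ := (Metric.infDist_lt_iff hne).mp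
    (lt_of_le_of_lt (hdense x) (by linarith : h < 3 * h / 2))
  have hw : h / 2 ≤ wf h p x := by
    refine le_trans ?_ (le_max_right _ _)
    linarith
  calc h / 2 ≤ wf h (⟨p, hpG⟩ : ↥G).1 x := hw
    _ ≤ Sf h G x := single_le_finsum _ (supp_w_fin hh hl hsep x) (fun q => wf_nonneg _ _)

lemma Sf_ne (hh : 0 < h) (hl : 0 < lam)
    (hsep : ∀ x ∈ G, ∀ y ∈ G, x ≠ y → lam * h ≤ dist x y)
    (hne : G.Nonempty) (hdense : ∀ x : Euc d, Metric.infDist x G ≤ h) (x : Euc d) :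
    Sf h G x ≠ 0 := by
  have := Sf_pos hh hl hsep hne hdense x
  exact (lt_of_lt_of_le (by linarith) this).ne'

lemma wf_le_Sf (hh : 0 < h) (hl : 0 < lam)
    (hsep : ∀ x ∈ G, ∀ y ∈ G, x ≠ y → lam * h ≤ dist x y) (p : ↥G) (x : Euc d) :
    wf h ↑p x ≤ Sf h G x :=
  single_le_finsum p (supp_w_fin hh hl hsep x) (fun q => wf_nonneg _ _)

lemma Bs_nonneg (x : Euc d) : 0 ≤ Bs lam h G x :=
  finsum_nonneg (fun p => bf_nonneg _ _)

lemma Bs_le_one (hh : 0 < h) (hl : 0 < lam) (hl1 : lam ≤ 1)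
    (hsep : ∀ x ∈ G, ∀ y ∈ G, x ≠ y → lam * h ≤ dist x y) (x : Euc d) :
    Bs lam h G x ≤ 1 := by
  classical
  by_cases hz : ∀ p : ↥G, bf lam h ↑p x = 0
  · rw [Bs, finsum_eq_zero_of_forall_eq_zero hz]; norm_num
  · push_neg at hz
    obtain ⟨q, hq⟩ := hz
    have : Bs lam h G x = bf lam h ↑q x := by
      apply finsum_eq_single
      intro p hpq
      by_contra hbp
      have h1 := bf_supp hl hh hq
      have h2 := bf_supp hl hh hbp
      have hne : (p : Euc d) ≠ ↑q := fun hc => hpq (Subtype.coe_injective hc)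
      have := hsep ↑p p.2 ↑q q.2 hne
      have := dist_triangle (p : Euc d) x ↑q
      rw [dist_comm (p : Euc d) x] at this
      nlinarith
    rw [this]
    exact bf_le_one hl hh _ _

lemma Bs_eq_one (hh : 0 < h) (hl : 0 < lam)
    (hsep : ∀ x ∈ G, ∀ y ∈ G, x ≠ y → lam * h ≤ dist x y) (q : ↥G) :
    Bs lam h G ↑q = 1 := by
  classical
  have h1 : bf lam h (q : Euc d) (q : Euc d) = 1 := by
    unfold bf; rw [dist_self]; norm_num
  have : Bs lam h G ↑q = bf lam h (q : Euc d) (q : Euc d) := by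
    apply finsum_eq_single
    intro p hpq
    apply bf_eq_zero hl hh
    have hne : ((q : Euc d)) ≠ ↑p := fun hc => hpq (Subtype.coe_injective hc.symm)
    have := hsep ↑q q.2 ↑p p.2 hne
    nlinarith
  rw [this, h1]

section ctx

variable (hh : 0 < h) (hl : 0 < lam) (hl1 : lam ≤ 1)
  (hsep : ∀ x ∈ G, ∀ y ∈ G, x ≠ y → lam * h ≤ dist x y)
  (hne : G.Nonempty) (hdense : ∀ x : Euc d, Metric.infDist x G ≤ h)

include hh hl hl1 hsep hne hdense

lemma af_nonneg (p : ↥G) (x : Euc d) : 0 ≤ af lam h G p x := by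
  have h1 := bf_nonneg (lam := lam) (h := h) (p := (p : Euc d)) (x := x)
  have h2 := Bs_le_one (G := G) hh hl hl1 hsep x
  have h3 := wf_nonneg (h := h) (p := (p : Euc d)) (x := x)
  have h4 := Sf_pos hh hl hsep hne hdense x
  have h5 : 0 ≤ wf h ↑p x / Sf h G x := div_nonneg h3 (by linarith)
  unfold af
  nlinarith

lemma af_supp {p : ↥G} {x : Euc d} (ha : af lam h G p x ≠ 0) : dist x ↑p ≤ 2 * h := by
  by_contra hd
  push_neg at hd
  apply ha
  unfold af
  rw [wf_eq_zero hd, bf_eq_zero hl hh (by nlinarith)]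
  ring

lemma supp_af_fin (x : Euc d) :
    (Function.support fun p : ↥G => af lam h G p x).Finite :=
  Set.Finite.subset (finite_ballG hh hl hsep x (R := 2 * h) (by positivity))
    (fun p hp => af_supp hh hl hl1 hsep hne hdense hp)

lemma af_le_one (p : ↥G) (x : Euc d) : af lam h G p x ≤ 1 := by
  have h1 : bf lam h ↑p x ≤ Bs lam h G x :=
    single_le_finsum p (supp_b_fin hh hl hl1 hsep x) (fun q => bf_nonneg _ _)
  have h2 := Bs_le_one (G := G) hh hl hl1 hsep x
  have h3 := wf_le_Sf (G := G) hh hl hsep p x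
  have h4 := Sf_pos hh hl hsep hne hdense x
  have h5 : wf h ↑p x / Sf h G x ≤ 1 := by
    rw [div_le_one (by linarith)]; exact h3
  have h6 : 0 ≤ wf h ↑p x / Sf h G x :=
    div_nonneg (wf_nonneg _ _) (by linarith)
  unfold af
  nlinarith

lemma sum_af (x : Euc d) : ∑ᶠ p : ↥G, af lam h G p x = 1 := by
  have hSne := Sf_ne hh hl hsep hne hdense x
  have h1 : ∀ p : ↥G, af lam h G p x
      = bf lam h ↑p x + ((1 - Bs lam h G x) / Sf h G x) * wf h ↑p x := by
    intro p; unfold af; field_simp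
  have hfin1 := supp_b_fin (G := G) hh hl hl1 hsep x
  have hfin2 := supp_w_fin (G := G) hh hl hsep x
  have hfin3 : (Function.support fun p : ↥G =>
      ((1 - Bs lam h G x) / Sf h G x) * wf h ↑p x).Finite := by
    apply Set.Finite.subset hfin2
    intro p hp
    simp only [Function.mem_support] at hp ⊢
    intro hw
    apply hp
    rw [hw, mul_zero]
  calc ∑ᶠ p : ↥G, af lam h G p x
      = ∑ᶠ p : ↥G, (bf lam h ↑p x + ((1 - Bs lam h G x) / Sf h G x) * wf h ↑p x) :=
        finsum_congr h1
    _ = (∑ᶠ p : ↥G, bf lam h ↑p x)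
        + ∑ᶠ p : ↥G, ((1 - Bs lam h G x) / Sf h G x) * wf h ↑p x :=
        finsum_add_distrib hfin1 hfin3
    _ = Bs lam h G x + ((1 - Bs lam h G x) / Sf h G x) * Sf h G x := by
        rw [← mul_finsum (fun p : ↥G => wf h ↑p x) ((1 - Bs lam h G x) / Sf h G x), Bs, Sf]
    _ = 1 := by field_simp; ring

end ctx

def Kc (d : ℕ) (lam : ℝ) : ℝ := (7 / lam) ^ d
def CLc (d : ℕ) (lam : ℝ) : ℝ := 4 / lam + 4 * Kc d lam / lam + 2 + 8 * Kc d lam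

lemma Kc_pos {lam : ℝ} (hl : 0 < lam) : 0 < Kc d lam := by unfold Kc; positivity
lemma Kc_ge_one {lam : ℝ} (hl : 0 < lam) (hl1 : lam ≤ 1) : 1 ≤ Kc d lam := by
  unfold Kc
  apply one_le_pow₀
  rw [le_div_iff₀ hl]; linarith
lemma CLc_pos {lam : ℝ} (hl : 0 < lam) : 0 < CLc d lam := by
  have := Kc_pos (d := d) hl; unfold CLc; positivity

section ctx2

variable (hh : 0 < h) (hl : 0 < lam) (hl1 : lam ≤ 1)
  (hsep : ∀ x ∈ G, ∀ y ∈ G, x ≠ y → lam * h ≤ dist x y)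
  (hne : G.Nonempty) (hdense : ∀ x : Euc d, Metric.infDist x G ≤ h)

include hh hl hl1 hsep hne hdense

lemma ext_node (g : ↥G → ℝ) (q : ↥G) : ext lam h G g (q : Euc d) = g q := by
  classical
  have haf : ∀ p : ↥G, af lam h G p (q : Euc d) = bf lam h (p : Euc d) (q : Euc d) := by
    intro p
    unfold af
    rw [Bs_eq_one hh hl hsep q]
    ring
  have h1 : ext lam h G g (q : Euc d) = g q * af lam h G q (q : Euc d) := by
    apply finsum_eq_single
    intro p hpq
    rw [haf p, bf_eq_zero hl hh ?_, mul_zero]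
    have hne2 : ((q : Euc d)) ≠ ↑p := fun hc => hpq (Subtype.coe_injective hc.symm)
    have := hsep ↑q q.2 ↑p p.2 hne2
    nlinarith
  rw [h1, haf]
  have : bf lam h (q : Euc d) (q : Euc d) = 1 := by
    unfold bf; rw [dist_self]; norm_num
  rw [this, mul_one]

lemma supp_mul_af_fin (g : ↥G → ℝ) (x : Euc d) :
    (Function.support fun p : ↥G => g p * af lam h G p x).Finite := by
  apply Set.Finite.subset (supp_af_fin hh hl hl1 hsep hne hdense x)
  intro p hp
  simp only [Function.mem_support] at hp ⊢
  intro hz; exact hp (by rw [hz, mul_zero])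

lemma ext_add (g₁ g₂ : ↥G → ℝ) (x : Euc d) :
    ext lam h G (fun p => g₁ p + g₂ p) x = ext lam h G g₁ x + ext lam h G g₂ x := by
  unfold ext
  rw [← finsum_add_distrib (supp_mul_af_fin hh hl hl1 hsep hne hdense g₁ x)
    (supp_mul_af_fin hh hl hl1 hsep hne hdense g₂ x)]
  apply finsum_congr
  intro p
  ring

lemma ext_smul (c : ℝ) (g : ↥G → ℝ) (x : Euc d) :
    ext lam h G (fun p => c * g p) x = c * ext lam h G g x := by
  unfold ext
  rw [mul_finsum]
  apply finsum_congr
  intro p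
  ring

lemma ext_mono (g₁ g₂ : ↥G → ℝ) (hg : ∀ p, g₁ p ≤ g₂ p) (x : Euc d) :
    ext lam h G g₁ x ≤ ext lam h G g₂ x := by
  classical
  set T := (supp_af_fin hh hl hl1 hsep hne hdense x).toFinset with hT
  have hs1 : (Function.support fun p : ↥G => g₁ p * af lam h G p x) ⊆ ↑T := by
    intro p hp
    simp only [Function.mem_support] at hp
    simp only [hT, Set.Finite.coe_toFinset, Function.mem_support]
    intro hz; exact hp (by rw [hz, mul_zero])
  have hs2 : (Function.support fun p : ↥G => g₂ p * af lam h G p x) ⊆ ↑T := by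
    intro p hp
    simp only [Function.mem_support] at hp
    simp only [hT, Set.Finite.coe_toFinset, Function.mem_support]
    intro hz; exact hp (by rw [hz, mul_zero])
  unfold ext
  rw [finsum_eq_sum_of_support_subset _ hs1, finsum_eq_sum_of_support_subset _ hs2]
  apply Finset.sum_le_sum
  intro p _
  exact mul_le_mul_of_nonneg_right (hg p) (af_nonneg hh hl hl1 hsep hne hdense p x)

lemma ext_bound {g : ↥G → ℝ} {M : ℝ} (hg : ∀ p, |g p| ≤ M) (x : Euc d) :
    |ext lam h G g x| ≤ M := by
  classical
  have hM : 0 ≤ M := le_trans (abs_nonneg _) (hg ⟨hne.choose, hne.choose_spec⟩)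
  set T := (supp_af_fin hh hl hl1 hsep hne hdense x).toFinset with hT
  have hsa : (Function.support fun p : ↥G => af lam h G p x) ⊆ ↑T := by
    simp [hT, Set.Finite.coe_toFinset]
  have hs1 : (Function.support fun p : ↥G => g p * af lam h G p x) ⊆ ↑T := by
    intro p hp
    simp only [Function.mem_support] at hp
    simp only [hT, Set.Finite.coe_toFinset, Function.mem_support]
    intro hz; exact hp (by rw [hz, mul_zero])
  have hsum1 : ∑ p ∈ T, af lam h G p x = 1 := by
    rw [← finsum_eq_sum_of_support_subset _ hsa]
    exact sum_af hh hl hl1 hsep hne hdense x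
  unfold ext
  rw [finsum_eq_sum_of_support_subset _ hs1]
  calc |∑ p ∈ T, g p * af lam h G p x| ≤ ∑ p ∈ T, |g p * af lam h G p x| :=
        Finset.abs_sum_le_sum_abs _ _
    _ ≤ ∑ p ∈ T, M * af lam h G p x := by
        apply Finset.sum_le_sum
        intro p _
        rw [abs_mul, abs_of_nonneg (af_nonneg hh hl hl1 hsep hne hdense p x)]
        exact mul_le_mul_of_nonneg_right (hg p) (af_nonneg hh hl hl1 hsep hne hdense p x)
    _ = M := by rw [← Finset.mul_sum, hsum1, mul_one]

end ctx2

section ctx3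

variable (hh : 0 < h) (hl : 0 < lam) (hl1 : lam ≤ 1)
  (hsep : ∀ x ∈ G, ∀ y ∈ G, x ≠ y → lam * h ≤ dist x y)
  (hne : G.Nonempty) (hdense : ∀ x : Euc d, Metric.infDist x G ≤ h)

include hh hl hl1 hsep hne hdense

lemma Sf_lip {x y : Euc d} (hxy : dist x y ≤ h) :
    |Sf h G x - Sf h G y| ≤ Kc d lam * dist x y := by
  classical
  set T := (finite_ballG hh hl hsep x (R := 3 * h) (by positivity)).toFinset with hT
  have hmemT : ∀ p : ↥G, dist x ↑p ≤ 3 * h → p ∈ T := by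
    intro p hp; simp [hT, Set.Finite.mem_toFinset, hp]
  have hsx : (Function.support fun p : ↥G => wf h ↑p x) ⊆ ↑T := by
    intro p hp
    simp only [hT, Set.Finite.coe_toFinset]
    exact le_trans (wf_supp hp) (by linarith)
  have hsy : (Function.support fun p : ↥G => wf h ↑p y) ⊆ ↑T := by
    intro p hp
    simp only [hT, Set.Finite.coe_toFinset]
    calc dist x ↑p ≤ dist x y + dist y ↑p := dist_triangle _ _ _
      _ ≤ h + 2 * h := add_le_add hxy (wf_supp hp)
      _ = 3 * h := by ring
  have hcard : (T.card : ℝ) ≤ Kc d lam := by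
    apply cardG hh hl hl1 hsep x
    intro p hp
    simpa [hT, Set.Finite.mem_toFinset] using hp
  unfold Sf
  rw [finsum_eq_sum_of_support_subset _ hsx, finsum_eq_sum_of_support_subset _ hsy,
    ← Finset.sum_sub_distrib]
  calc |∑ p ∈ T, (wf h ↑p x - wf h ↑p y)| ≤ ∑ p ∈ T, |wf h ↑p x - wf h ↑p y| :=
        Finset.abs_sum_le_sum_abs _ _
    _ ≤ ∑ _p ∈ T, dist x y := Finset.sum_le_sum (fun p _ => wf_lip _ _ _)
    _ = (T.card : ℝ) * dist x y := by rw [Finset.sum_const, nsmul_eq_mul]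
    _ ≤ Kc d lam * dist x y := mul_le_mul_of_nonneg_right hcard dist_nonneg

lemma Bs_lip {x y : Euc d} (hxy : dist x y ≤ h) :
    |Bs lam h G x - Bs lam h G y| ≤ Kc d lam * (4 / (lam * h)) * dist x y := by
  classical
  set T := (finite_ballG hh hl hsep x (R := 3 * h) (by positivity)).toFinset with hT
  have hsx : (Function.support fun p : ↥G => bf lam h ↑p x) ⊆ ↑T := by
    intro p hp
    simp only [hT, Set.Finite.coe_toFinset]
    refine le_trans (bf_supp hl hh hp) (by nlinarith)
  have hsy : (Function.support fun p : ↥G => bf lam h ↑p y) ⊆ ↑T := by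
    intro p hp
    simp only [hT, Set.Finite.coe_toFinset]
    calc dist x ↑p ≤ dist x y + dist y ↑p := dist_triangle _ _ _
      _ ≤ h + lam * h / 4 := add_le_add hxy (bf_supp hl hh hp)
      _ ≤ 3 * h := by nlinarith
  have hcard : (T.card : ℝ) ≤ Kc d lam := by
    apply cardG hh hl hl1 hsep x
    intro p hp
    simpa [hT, Set.Finite.mem_toFinset] using hp
  unfold Bs
  rw [finsum_eq_sum_of_support_subset _ hsx, finsum_eq_sum_of_support_subset _ hsy,
    ← Finset.sum_sub_distrib]
  calc |∑ p ∈ T, (bf lam h ↑p x - bf lam h ↑p y)| ≤ ∑ p ∈ T, |bf lam h ↑p x - bf lam h ↑p y| :=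
        Finset.abs_sum_le_sum_abs _ _
    _ ≤ ∑ _p ∈ T, 4 / (lam * h) * dist x y := Finset.sum_le_sum (fun p _ => bf_lip hl hh _ _ _)
    _ = (T.card : ℝ) * (4 / (lam * h) * dist x y) := by rw [Finset.sum_const, nsmul_eq_mul]
    _ ≤ Kc d lam * (4 / (lam * h)) * dist x y := by
        rw [mul_assoc]
        exact mul_le_mul_of_nonneg_right hcard (by positivity)

lemma af_pair (p : ↥G) {x y : Euc d} (hxy : dist x y ≤ h) :
    |af lam h G p x - af lam h G p y| ≤ CLc d lam / h * dist x y := by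
  set D := dist x y with hD
  have hD0 : 0 ≤ D := dist_nonneg
  set K := Kc d lam with hK
  have hK1 : 1 ≤ K := Kc_ge_one hl hl1
  have hK0 : 0 < K := by linarith
  set Bx := Bs lam h G x; set By := Bs lam h G y
  set Sx := Sf h G x; set Sy := Sf h G y
  set wx := wf h ↑p x; set wy := wf h ↑p y
  have hSx : h / 2 ≤ Sx := Sf_pos hh hl hsep hne hdense x
  have hSy : h / 2 ≤ Sy := Sf_pos hh hl hsep hne hdense y
  have hSx0 : 0 < Sx := by linarith
  have hSy0 : 0 < Sy := by linarith
  have hwx0 : 0 ≤ wx := wf_nonneg _ _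
  have hwy0 : 0 ≤ wy := wf_nonneg _ _
  have hwy2 : wy ≤ 2 * h := wf_le hh _ _
  have hBx0 : 0 ≤ Bx := Bs_nonneg x
  have hBx1 : Bx ≤ 1 := Bs_le_one hh hl hl1 hsep x
  have hwlip : |wx - wy| ≤ D := wf_lip _ _ _
  have hblip : |bf lam h ↑p x - bf lam h ↑p y| ≤ 4 / (lam * h) * D := bf_lip hl hh _ _ _
  have hSlip : |Sx - Sy| ≤ K * D := Sf_lip hh hl hl1 hsep hne hdense hxy
  have hBlip : |Bx - By| ≤ K * (4 / (lam * h)) * D := Bs_lip hh hl hl1 hsep hne hdense hxy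
  have hsplit : wx / Sx - wy / Sy = (wx - wy) / Sx + wy * (Sy - Sx) / (Sx * Sy) := by
    field_simp
    ring
  have ht3a : |(wx - wy) / Sx| ≤ D / (h / 2) := by
    rw [abs_div, abs_of_pos hSx0]
    exact div_le_div₀ hD0 hwlip (by linarith) hSx
  have ht3b : |wy * (Sy - Sx) / (Sx * Sy)| ≤ 2 * h * (K * D) / (h / 2 * (h / 2)) := by
    rw [abs_div, abs_mul, abs_of_nonneg hwy0, abs_of_pos (by positivity : (0:ℝ) < Sx * Sy)]
    apply div_le_div₀ (by positivity) ?_ (by positivity) ?_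
    · have : |Sy - Sx| ≤ K * D := by rw [abs_sub_comm]; exact hSlip
      exact mul_le_mul hwy2 this (abs_nonneg _) (by linarith)
    · exact mul_le_mul hSx hSy (by linarith) (by linarith)
  have ht3 : |wx / Sx - wy / Sy| ≤ 2 / h * D + 8 * K / h * D := by
    rw [hsplit]
    refine (abs_add_le _ _).trans ?_
    have e1 : D / (h / 2) = 2 / h * D := by field_simp
    have e2 : 2 * h * (K * D) / (h / 2 * (h / 2)) = 8 * K / h * D := by field_simp; ring
    rw [e1] at ht3a
    rw [e2] at ht3b
    linarith
  have hsplit2 : af lam h G p x - af lam h G p y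
      = (bf lam h ↑p x - bf lam h ↑p y) + ((1 - Bx) * (wx / Sx - wy / Sy)
        + (By - Bx) * (wy / Sy)) := by
    unfold af
    ring
  have hq1 : |1 - Bx| ≤ 1 := abs_le.mpr ⟨by linarith, by linarith⟩
  have hq2 : 0 ≤ wy / Sy ∧ wy / Sy ≤ 1 := by
    constructor
    · positivity
    · rw [div_le_one hSy0]
      exact wf_le_Sf hh hl hsep p y
  have ht2 : |(1 - Bx) * (wx / Sx - wy / Sy)| ≤ 2 / h * D + 8 * K / h * D := by
    rw [abs_mul]
    calc |1 - Bx| * |wx / Sx - wy / Sy| ≤ 1 * (2 / h * D + 8 * K / h * D) :=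
          mul_le_mul hq1 ht3 (abs_nonneg _) one_pos.le
      _ = 2 / h * D + 8 * K / h * D := one_mul _
  have ht4 : |(By - Bx) * (wy / Sy)| ≤ K * (4 / (lam * h)) * D := by
    rw [abs_mul, abs_of_nonneg hq2.1]
    calc |By - Bx| * (wy / Sy) ≤ (K * (4 / (lam * h)) * D) * 1 := by
          apply mul_le_mul ?_ hq2.2 hq2.1 (by positivity)
          rw [abs_sub_comm]; exact hBlip
      _ = K * (4 / (lam * h)) * D := mul_one _
  rw [hsplit2]
  have final : |bf lam h ↑p x - bf lam h ↑p y| + (|(1 - Bx) * (wx / Sx - wy / Sy)|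
      + |(By - Bx) * (wy / Sy)|) ≤ CLc d lam / h * D := by
    have e3 : CLc d lam / h * D
        = 4 / (lam * h) * D + (2 / h * D + 8 * K / h * D) + K * (4 / (lam * h)) * D := by
      unfold CLc
      rw [← hK]
      field_simp
      ring
    rw [e3]
    linarith
  calc |(bf lam h ↑p x - bf lam h ↑p y) + ((1 - Bx) * (wx / Sx - wy / Sy)
        + (By - Bx) * (wy / Sy))|
      ≤ |bf lam h ↑p x - bf lam h ↑p y| + (|(1 - Bx) * (wx / Sx - wy / Sy)|
        + |(By - Bx) * (wy / Sy)|) := (abs_add_le _ _).trans (by gcongr; exact abs_add_le _ _)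
    _ ≤ CLc d lam / h * D := final

end ctx3

section ctx4

variable (hh : 0 < h) (hl : 0 < lam) (hl1 : lam ≤ 1)
  (hsep : ∀ x ∈ G, ∀ y ∈ G, x ≠ y → lam * h ≤ dist x y)
  (hne : G.Nonempty) (hdense : ∀ x : Euc d, Metric.infDist x G ≤ h)

include hh hl hl1 hsep hne hdense

lemma ext_osc (u : Euc d → ℝ) {ω : ℝ}
    (hu : ∀ (p : ↥G) (z : Euc d), dist z ↑p ≤ 3 * h → |u ↑p - u z| ≤ ω) (x : Euc d) :
    |ext lam h G (fun p => u ↑p) x - u x| ≤ ω := by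
  classical
  set T := (supp_af_fin hh hl hl1 hsep hne hdense x).toFinset with hT
  have hsa : (Function.support fun p : ↥G => af lam h G p x) ⊆ ↑T := by
    simp [hT, Set.Finite.coe_toFinset]
  have hs1 : (Function.support fun p : ↥G => u ↑p * af lam h G p x) ⊆ ↑T := by
    intro p hp
    simp only [Function.mem_support] at hp
    simp only [hT, Set.Finite.coe_toFinset, Function.mem_support]
    intro hz; exact hp (by rw [hz, mul_zero])
  have hsum1 : ∑ p ∈ T, af lam h G p x = 1 := by
    rw [← finsum_eq_sum_of_support_subset _ hsa]
    exact sum_af hh hl hl1 hsep hne hdense x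
  have hrepr : ext lam h G (fun p => u ↑p) x - u x
      = ∑ p ∈ T, (u ↑p - u x) * af lam h G p x := by
    unfold ext
    rw [finsum_eq_sum_of_support_subset _ hs1]
    have : ∑ p ∈ T, (u ↑p - u x) * af lam h G p x
        = ∑ p ∈ T, u ↑p * af lam h G p x - u x * ∑ p ∈ T, af lam h G p x := by
      rw [Finset.mul_sum, ← Finset.sum_sub_distrib]
      apply Finset.sum_congr rfl
      intro p _
      ring
    rw [this, hsum1, mul_one]
  have hdistT : ∀ p ∈ T, af lam h G p x ≠ 0 := by
    intro p hp
    simpa [hT, Set.Finite.mem_toFinset] using hp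
  rw [hrepr]
  calc |∑ p ∈ T, (u ↑p - u x) * af lam h G p x|
      ≤ ∑ p ∈ T, |(u ↑p - u x) * af lam h G p x| := Finset.abs_sum_le_sum_abs _ _
    _ ≤ ∑ p ∈ T, ω * af lam h G p x := by
        apply Finset.sum_le_sum
        intro p hp
        rw [abs_mul, abs_of_nonneg (af_nonneg hh hl hl1 hsep hne hdense p x)]
        apply mul_le_mul_of_nonneg_right ?_ (af_nonneg hh hl hl1 hsep hne hdense p x)
        apply hu
        have := af_supp hh hl hl1 hsep hne hdense (hdistT p hp)
        linarith
    _ = ω := by rw [← Finset.mul_sum, hsum1, mul_one]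

lemma ext_pair (u : Euc d → ℝ) {ω : ℝ}
    (hu : ∀ (p : ↥G) (z : Euc d), dist z ↑p ≤ 3 * h → |u ↑p - u z| ≤ ω)
    {x y : Euc d} (hxy : dist x y ≤ h) :
    |ext lam h G (fun p => u ↑p) x - ext lam h G (fun p => u ↑p) y|
      ≤ Kc d lam * (CLc d lam / h) * ω * dist x y := by
  classical
  have hω : 0 ≤ ω := by
    obtain ⟨p, hp⟩ := hne
    have := hu ⟨p, hp⟩ ((⟨p, hp⟩ : ↥G) : Euc d) (by rw [dist_self]; positivity)
    exact le_trans (abs_nonneg _) this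
  set T := (finite_ballG hh hl hsep x (R := 3 * h) (by positivity)).toFinset with hT
  have hdistT : ∀ p ∈ T, dist x ↑p ≤ 3 * h := by
    intro p hp
    simpa [hT, Set.Finite.mem_toFinset] using hp
  have hcard : (T.card : ℝ) ≤ Kc d lam := cardG hh hl hl1 hsep x T hdistT
  have hsax : (Function.support fun p : ↥G => af lam h G p x) ⊆ ↑T := by
    intro p hp
    simp only [hT, Set.Finite.coe_toFinset]
    exact le_trans (af_supp hh hl hl1 hsep hne hdense hp) (by linarith)
  have hsay : (Function.support fun p : ↥G => af lam h G p y) ⊆ ↑T := by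
    intro p hp
    simp only [hT, Set.Finite.coe_toFinset]
    calc dist x ↑p ≤ dist x y + dist y ↑p := dist_triangle _ _ _
      _ ≤ h + 2 * h := add_le_add hxy (af_supp hh hl hl1 hsep hne hdense hp)
      _ = 3 * h := by ring
  have hs1 : (Function.support fun p : ↥G => u ↑p * af lam h G p x) ⊆ ↑T := by
    intro p hp
    simp only [Function.mem_support] at hp
    apply hsax
    simp only [Function.mem_support]
    intro hz; exact hp (by rw [hz, mul_zero])
  have hs2 : (Function.support fun p : ↥G => u ↑p * af lam h G p y) ⊆ ↑T := by
    intro p hp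
    simp only [Function.mem_support] at hp
    apply hsay
    simp only [Function.mem_support]
    intro hz; exact hp (by rw [hz, mul_zero])
  have hsumx : ∑ p ∈ T, af lam h G p x = 1 := by
    rw [← finsum_eq_sum_of_support_subset _ hsax]
    exact sum_af hh hl hl1 hsep hne hdense x
  have hsumy : ∑ p ∈ T, af lam h G p y = 1 := by
    rw [← finsum_eq_sum_of_support_subset _ hsay]
    exact sum_af hh hl hl1 hsep hne hdense y
  have hrepr : ext lam h G (fun p => u ↑p) x - ext lam h G (fun p => u ↑p) y
      = ∑ p ∈ T, (u ↑p - u x) * (af lam h G p x - af lam h G p y) := by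
    unfold ext
    rw [finsum_eq_sum_of_support_subset _ hs1, finsum_eq_sum_of_support_subset _ hs2]
    have expand : ∑ p ∈ T, (u ↑p - u x) * (af lam h G p x - af lam h G p y)
        = (∑ p ∈ T, u ↑p * af lam h G p x) - (∑ p ∈ T, u ↑p * af lam h G p y)
          - u x * ((∑ p ∈ T, af lam h G p x) - (∑ p ∈ T, af lam h G p y)) := by
      rw [← Finset.sum_sub_distrib, ← Finset.sum_sub_distrib, Finset.mul_sum,
        ← Finset.sum_sub_distrib]
      apply Finset.sum_congr rfl
      intro p _
      ring
    rw [expand, hsumx, hsumy]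
    ring
  rw [hrepr]
  calc |∑ p ∈ T, (u ↑p - u x) * (af lam h G p x - af lam h G p y)|
      ≤ ∑ p ∈ T, |(u ↑p - u x) * (af lam h G p x - af lam h G p y)| :=
        Finset.abs_sum_le_sum_abs _ _
    _ ≤ ∑ _p ∈ T, ω * (CLc d lam / h * dist x y) := by
        apply Finset.sum_le_sum
        intro p hp
        rw [abs_mul]
        apply mul_le_mul ?_ (af_pair hh hl hl1 hsep hne hdense p hxy) (abs_nonneg _) hω
        exact hu p x (hdistT p hp)
    _ = (T.card : ℝ) * (ω * (CLc d lam / h * dist x y)) := by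
        rw [Finset.sum_const, nsmul_eq_mul]
    _ ≤ Kc d lam * (CLc d lam / h) * ω * dist x y := by
        have hCL := CLc_pos (d := d) hl
        have : (T.card : ℝ) * (ω * (CLc d lam / h * dist x y))
            ≤ Kc d lam * (ω * (CLc d lam / h * dist x y)) := by
          apply mul_le_mul_of_nonneg_right hcard
          positivity
        calc (T.card : ℝ) * (ω * (CLc d lam / h * dist x y))
            ≤ Kc d lam * (ω * (CLc d lam / h * dist x y)) := this
          _ = Kc d lam * (CLc d lam / h) * ω * dist x y := by ring

end ctx4

section ctx5

variable (hh : 0 < h) (hl : 0 < lam) (hl1 : lam ≤ 1)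
  (hsep : ∀ x ∈ G, ∀ y ∈ G, x ≠ y → lam * h ≤ dist x y)
  (hne : G.Nonempty) (hdense : ∀ x : Euc d, Metric.infDist x G ≤ h)

include hh hl hl1 hsep hne hdense

lemma locfin (f : ↥G → Euc d → ℝ) (hf : ∀ p z, f p z ≠ 0 → dist z ↑p ≤ 2 * h) :
    LocallyFinite fun p : ↥G => Function.support (f p) := by
  intro x
  refine ⟨ball x 1, ball_mem_nhds x one_pos, ?_⟩
  apply Set.Finite.subset (finite_ballG hh hl hsep x (R := 2 * h + 1) (by positivity))
  rintro p ⟨z, hz1, hz2⟩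
  have h1 : dist z ↑p ≤ 2 * h := hf p z hz1
  have h2 : dist x z < 1 := mem_ball'.mp hz2
  calc dist x ↑p ≤ dist x z + dist z ↑p := dist_triangle _ _ _
    _ ≤ 2 * h + 1 := by linarith

omit hh hl hl1 hsep hne hdense in
lemma wf_cont (p : Euc d) : Continuous fun x : Euc d => wf h p x := by
  unfold wf
  exact continuous_const.max (continuous_const.sub (continuous_id.dist continuous_const))

omit hh hl hl1 hsep hne hdense in
lemma bf_cont (p : Euc d) : Continuous fun x : Euc d => bf lam h p x := by
  unfold bf
  apply continuous_const.max
  apply continuous_const.sub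
  exact (continuous_const.mul (continuous_id.dist continuous_const)).div_const _

lemma Sf_cont : Continuous (Sf h G) := by
  apply continuous_finsum (fun p => wf_cont _)
  exact locfin hh hl hl1 hsep hne hdense _ (fun p z hz => wf_supp hz)

lemma Bs_cont : Continuous (Bs lam h G) := by
  apply continuous_finsum (fun p => bf_cont _)
  exact locfin hh hl hl1 hsep hne hdense _ (fun p z hz => (bf_supp hl hh hz).trans (by nlinarith))

lemma af_cont (p : ↥G) : Continuous (af lam h G p) := by
  unfold af
  apply (bf_cont _).add
  apply (continuous_const.sub (Bs_cont hh hl hl1 hsep hne hdense)).mul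
  exact (wf_cont _).div (Sf_cont hh hl hl1 hsep hne hdense)
    (fun x => Sf_ne hh hl hsep hne hdense x)

lemma ext_cont (g : ↥G → ℝ) : Continuous (ext lam h G g) := by
  apply continuous_finsum
    (fun p => continuous_const.mul (af_cont hh hl hl1 hsep hne hdense p))
  apply locfin hh hl hl1 hsep hne hdense
  intro p z hz
  apply af_supp hh hl hl1 hsep hne hdense
  intro hc
  exact hz (by rw [Pi.mul_apply, hc, mul_zero])

end ctx5

section glue

variable {γ : ℝ} {u : Euc d → ℝ}

lemma holderSet_nonempty (hb : ∃ M : ℝ, ∀ x y : Euc d, |u x - u y| ≤ M * ‖x - y‖ ^ γ) :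
    {M : ℝ | 0 ≤ M ∧ ∀ x y : Euc d, |u x - u y| ≤ M * ‖x - y‖ ^ γ}.Nonempty := by
  obtain ⟨M, hM⟩ := hb
  refine ⟨max M 0, le_max_right _ _, fun x y => ?_⟩
  refine (hM x y).trans (mul_le_mul_of_nonneg_right (le_max_left _ _) ?_)
  positivity

lemma holderSet_bddBelow :
    BddBelow {M : ℝ | 0 ≤ M ∧ ∀ x y : Euc d, |u x - u y| ≤ M * ‖x - y‖ ^ γ} :=
  ⟨0, fun M hM => hM.1⟩

lemma holderSemi_nonneg (hb : ∃ M : ℝ, ∀ x y : Euc d, |u x - u y| ≤ M * ‖x - y‖ ^ γ) :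
    0 ≤ holderSemi γ u :=
  le_csInf (holderSet_nonempty hb) (fun M hM => hM.1)

lemma holderSemi_le {M : ℝ} (hM0 : 0 ≤ M)
    (hM : ∀ x y : Euc d, |u x - u y| ≤ M * ‖x - y‖ ^ γ) : holderSemi γ u ≤ M :=
  csInf_le holderSet_bddBelow ⟨hM0, hM⟩

lemma le_holderSemi (hγ : 0 < γ)
    (hb : ∃ M : ℝ, ∀ x y : Euc d, |u x - u y| ≤ M * ‖x - y‖ ^ γ) (x y : Euc d) :
    |u x - u y| ≤ holderSemi γ u * ‖x - y‖ ^ γ := by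
  rcases eq_or_ne x y with rfl | hxy
  · simp [Real.zero_rpow hγ.ne']
  · have hn : (0:ℝ) < ‖x - y‖ := by
      rw [norm_pos_iff, sub_ne_zero]; exact hxy
    have ht : (0:ℝ) < ‖x - y‖ ^ γ := Real.rpow_pos_of_pos hn γ
    rw [← div_le_iff₀ ht]
    apply le_csInf (holderSet_nonempty hb)
    intro M hM
    rw [div_le_iff₀ ht]
    exact hM.2 x y

lemma abs_le_supNorm (hb : ∃ M : ℝ, ∀ x : Euc d, |u x| ≤ M) (x : Euc d) :
    |u x| ≤ supNorm u := by
  obtain ⟨M, hM⟩ := hb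
  exact le_ciSup ⟨M, by rintro _ ⟨z, rfl⟩; exact hM z⟩ x

lemma supNorm_le {M : ℝ} (hM : ∀ x : Euc d, |u x| ≤ M) : supNorm u ≤ M :=
  ciSup_le hM

lemma supNorm_nonneg (hb : ∃ M : ℝ, ∀ x : Euc d, |u x| ≤ M) : 0 ≤ supNorm u :=
  (abs_nonneg _).trans (abs_le_supNorm hb 0)

lemma norm_fderiv_le_gradSup (hb : ∃ M : ℝ, ∀ x : Euc d, ‖fderiv ℝ u x‖ ≤ M) (x : Euc d) :
    ‖fderiv ℝ u x‖ ≤ gradSup u := by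
  obtain ⟨M, hM⟩ := hb
  exact le_ciSup ⟨M, by rintro _ ⟨z, rfl⟩; exact hM z⟩ x

lemma gradSup_nonneg (hb : ∃ M : ℝ, ∀ x : Euc d, ‖fderiv ℝ u x‖ ≤ M) : 0 ≤ gradSup u :=
  (norm_nonneg _).trans (norm_fderiv_le_gradSup hb 0)

lemma lip_of_C1 (hu : ContDiff ℝ 1 u)
    (hb : ∃ M : ℝ, ∀ x : Euc d, ‖fderiv ℝ u x‖ ≤ M) (x y : Euc d) :
    |u x - u y| ≤ gradSup u * ‖x - y‖ := by
  have := Convex.norm_image_sub_le_of_norm_fderiv_le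
    (f := u) (C := gradSup u) (s := (Set.univ : Set (Euc d)))
    (fun z _ => (hu.differentiable one_ne_zero).differentiableAt)
    (fun z _ => norm_fderiv_le_gradSup hb z) convex_univ (Set.mem_univ y) (Set.mem_univ x)
  rwa [Real.norm_eq_abs] at this

end glue

section rpow

lemma rpow_helper1 {γ h D : ℝ} (hγ0 : 0 < γ) (hγ1 : γ ≤ 1) (hh : 0 < h) (hD0 : 0 ≤ D)
    (hDh : D ≤ h) : h ^ γ * D ≤ D ^ γ * h := by
  rcases eq_or_lt_of_le hD0 with hD | hD
  · rw [← hD, Real.zero_rpow hγ0.ne', mul_zero, zero_mul]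
  · have e1 : D = D ^ γ * D ^ (1 - γ) := by
      rw [← Real.rpow_add hD]; norm_num
    have e2 : h = h ^ γ * h ^ (1 - γ) := by
      rw [← Real.rpow_add hh]; norm_num
    calc h ^ γ * D = h ^ γ * (D ^ γ * D ^ (1 - γ)) := by rw [← e1]
      _ ≤ h ^ γ * (D ^ γ * h ^ (1 - γ)) := by
          exact mul_le_mul_of_nonneg_left
            (mul_le_mul_of_nonneg_left
              (Real.rpow_le_rpow hD.le hDh (by linarith : (0:ℝ) ≤ 1 - γ))
              (Real.rpow_pos_of_pos hD γ).le)
            (Real.rpow_pos_of_pos hh γ).le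
      _ = D ^ γ * h := by rw [mul_comm (D ^ γ) _, ← mul_assoc, ← e2, mul_comm]

lemma rpow_helper3 {γ h D : ℝ} (hγ0 : 0 < γ) (hγ1 : γ ≤ 1) (hh : 0 < h) (hD0 : 0 ≤ D)
    (hDh : D ≤ h) : D ≤ D ^ γ * h ^ (1 - γ) := by
  rcases eq_or_lt_of_le hD0 with hD | hD
  · rw [← hD, Real.zero_rpow hγ0.ne', zero_mul]
  · have e1 : D = D ^ γ * D ^ (1 - γ) := by
      rw [← Real.rpow_add hD]; norm_num
    calc D = D ^ γ * D ^ (1 - γ) := e1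
      _ ≤ D ^ γ * h ^ (1 - γ) := by
          apply mul_le_mul_of_nonneg_left
            (Real.rpow_le_rpow hD0 hDh (by linarith)) (Real.rpow_pos_of_pos hD γ).le

lemma rpow_helper4 {γ h D : ℝ} (hγ0 : 0 < γ) (hh : 0 < h) (hD : h ≤ D) :
    h ≤ D ^ γ * h ^ (1 - γ) := by
  have e2 : h = h ^ γ * h ^ (1 - γ) := by
    rw [← Real.rpow_add hh]; norm_num
  calc h = h ^ γ * h ^ (1 - γ) := e2
    _ ≤ D ^ γ * h ^ (1 - γ) := by
        apply mul_le_mul_of_nonneg_right (Real.rpow_le_rpow hh.le hD hγ0.le)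
          (Real.rpow_pos_of_pos hh _).le

lemma rpow_helper5 {γ h : ℝ} (hγ0 : 0 < γ) (hγ1 : γ ≤ 1) (hh : 0 < h) :
    (3 * h) ^ γ ≤ 3 * h ^ γ := by
  rw [Real.mul_rpow (by norm_num) hh.le]
  apply mul_le_mul_of_nonneg_right ?_ (Real.rpow_pos_of_pos hh γ).le
  calc (3:ℝ) ^ γ ≤ (3:ℝ) ^ (1:ℝ) := Real.rpow_le_rpow_of_exponent_le (by norm_num) hγ1
    _ = 3 := Real.rpow_one 3

lemma rpow_helper6 {γ h D : ℝ} (hγ0 : 0 < γ) (hh : 0 < h) (hD : h ≤ D) :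
    h ^ γ ≤ D ^ γ := Real.rpow_le_rpow hh.le hD hγ0.le

end rpow

end MHE

set_option maxHeartbeats 1000000 in
/-- monotone linear Hölder extension from an `(h,λ)`-net `G`: an
extension operator which is linear, order preserving, the identity on `G`, bounded on
`C^{0,γ}` uniformly in the net, and approximating bounded `C¹` functions to order
`h^{1-γ}` in the `C^{0,γ}` norm. -/
theorem monotone_holder_extension (d : ℕ) (hd : 1 ≤ d) :
    ∃ h₀ : ℝ, 0 < h₀ ∧
      ∀ γ lam : ℝ, γ ∈ Set.Ioo (0 : ℝ) 1 → lam ∈ Set.Ioc (0 : ℝ) 1 →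
      ∃ C : ℝ, 0 < C ∧
        ∀ h : ℝ, h ∈ Set.Ioc (0 : ℝ) h₀ →
        ∀ G : Set (Euc d), IsNet h lam G →
        ∃ Ext : (G → ℝ) → (Euc d → ℝ),
          (∀ g₁ g₂ : G → ℝ, BddFun g₁ → BddFun g₂ → ∀ x,
            Ext (fun p => g₁ p + g₂ p) x = Ext g₁ x + Ext g₂ x) ∧
          (∀ (c : ℝ) (g : G → ℝ), BddFun g → ∀ x,
            Ext (fun p => c * g p) x = c * Ext g x) ∧
          (∀ g₁ g₂ : G → ℝ, BddFun g₁ → BddFun g₂ → (∀ p, g₁ p ≤ g₂ p) →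
            ∀ x, Ext g₁ x ≤ Ext g₂ x) ∧
          (∀ g : G → ℝ, BddFun g → IsCb (Ext g)) ∧
          (∀ g : G → ℝ, BddFun g → ∀ p : G, Ext g p.1 = g p) ∧
          (∀ u : Euc d → ℝ, IsHolderB γ u →
            IsHolderB γ (Ext (fun p => u p.1)) ∧
            holderNorm γ (Ext (fun p => u p.1)) ≤ C * holderNorm γ u) ∧
          (∀ u : Euc d → ℝ, ContDiff ℝ 1 u →
            (∃ M : ℝ, ∀ x, |u x| ≤ M ∧ ‖fderiv ℝ u x‖ ≤ M) →
            IsHolderB γ (fun x => Ext (fun p => u p.1) x - u x) ∧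
            holderNorm γ (fun x => Ext (fun p => u p.1) x - u x) ≤
              C * h ^ ((1 : ℝ) - γ) * (supNorm u + gradSup u)) := by
  refine ⟨1, one_pos, ?_⟩
  intro γ lam hγm hlamm
  obtain ⟨hγ0, hγ1⟩ := hγm
  obtain ⟨hl, hl1⟩ := hlamm
  have hK : 0 < MHE.Kc d lam := MHE.Kc_pos hl
  have hCL : 0 < MHE.CLc d lam := MHE.CLc_pos hl
  set K := MHE.Kc d lam with hKdef
  set CL := MHE.CLc d lam with hCLdef
  have h3KCL : 0 < 3 * K * CL := mul_pos (mul_pos (by norm_num) hK) hCL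
  refine ⟨3 * K * CL + 20, by linarith, ?_⟩
  intro h hhm G hnet
  obtain ⟨hh, hh1⟩ := hhm
  obtain ⟨hne, hdense, hsep⟩ := hnet
  have hγ1' : γ ≤ 1 := hγ1.le
  refine ⟨MHE.ext lam h G, ?_, ?_, ?_, ?_, ?_, ?_, ?_⟩
  · intro g₁ g₂ _ _ x
    exact MHE.ext_add hh hl hl1 hsep hne hdense g₁ g₂ x
  · intro c g _ x
    exact MHE.ext_smul hh hl hl1 hsep hne hdense c g x
  · intro g₁ g₂ _ _ hg x
    exact MHE.ext_mono hh hl hl1 hsep hne hdense g₁ g₂ hg x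
  · intro g hg
    obtain ⟨M, hM⟩ := hg
    exact ⟨MHE.ext_cont hh hl hl1 hsep hne hdense g,
      M, fun x => MHE.ext_bound hh hl hl1 hsep hne hdense hM x⟩
  · intro g _ p
    exact MHE.ext_node hh hl hl1 hsep hne hdense g p
  · -- Hölder boundedness
    intro u hu
    obtain ⟨⟨M₁, hM₁⟩, hbH⟩ := hu
    have hMu0 : 0 ≤ supNorm u := MHE.supNorm_nonneg ⟨M₁, hM₁⟩
    have hHu0 : 0 ≤ holderSemi γ u := MHE.holderSemi_nonneg hbH
    set Mu := supNorm u with hMud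
    set Hu := holderSemi γ u with hHud
    have hbu : ∀ x, |u x| ≤ Mu := MHE.abs_le_supNorm ⟨M₁, hM₁⟩
    have hHo : ∀ x y, |u x - u y| ≤ Hu * ‖x - y‖ ^ γ := MHE.le_holderSemi hγ0 hbH
    set ω := Hu * (3 * h) ^ γ with hωd
    have h3h : (0:ℝ) < (3 * h) ^ γ := Real.rpow_pos_of_pos (by linarith) γ
    have hω0 : 0 ≤ ω := mul_nonneg hHu0 h3h.le
    have hmod : ∀ (p : ↥G) (z : Euc d), dist z ↑p ≤ 3 * h → |u ↑p - u z| ≤ ω := by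
      intro p z hpz
      refine (hHo ↑p z).trans ?_
      apply mul_le_mul_of_nonneg_left ?_ hHu0
      apply Real.rpow_le_rpow (norm_nonneg _) ?_ hγ0.le
      rw [← dist_eq_norm, dist_comm]
      exact hpz
    set F := MHE.ext lam h G (fun p => u ↑p) with hFd
    have hFb : ∀ x, |F x| ≤ Mu :=
      fun x => MHE.ext_bound hh hl hl1 hsep hne hdense (fun p => hbu ↑p) x
    have hosc : ∀ x, |F x - u x| ≤ ω :=
      fun x => MHE.ext_osc hh hl hl1 hsep hne hdense u hmod x
    have hsemiF : ∀ x y, |F x - F y| ≤ (3 * K * CL + 7) * Hu * ‖x - y‖ ^ γ := by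
      intro x y
      rw [← dist_eq_norm]
      set D := dist x y with hdD
      have hD0 : 0 ≤ D := dist_nonneg
      have hDγ : 0 ≤ D ^ γ := Real.rpow_nonneg hD0 γ
      rcases le_or_gt D h with hcase | hcase
      · refine (MHE.ext_pair hh hl hl1 hsep hne hdense u hmod hcase).trans ?_
        have key : (3 * h) ^ γ * D ≤ 3 * (D ^ γ * h) := by
          calc (3 * h) ^ γ * D ≤ 3 * h ^ γ * D :=
                mul_le_mul_of_nonneg_right (MHE.rpow_helper5 hγ0 hγ1' hh) hD0
            _ = 3 * (h ^ γ * D) := by ring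
            _ ≤ 3 * (D ^ γ * h) := by
                have := MHE.rpow_helper1 hγ0 hγ1' hh hD0 hcase
                linarith
        have e : K * (CL / h) * ω * D = K * CL * Hu * ((3 * h) ^ γ * D) / h := by
          rw [hωd]; field_simp
        have e2 : K * CL * Hu * (3 * (D ^ γ * h)) / h = 3 * K * CL * Hu * D ^ γ := by
          field_simp
        rw [e]
        calc K * CL * Hu * ((3 * h) ^ γ * D) / h
            ≤ K * CL * Hu * (3 * (D ^ γ * h)) / h := by
              gcongr
          _ = 3 * K * CL * Hu * D ^ γ := e2
          _ ≤ (3 * K * CL + 7) * Hu * D ^ γ := by nlinarith [mul_nonneg hHu0 hDγ]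
      · have h1 := hosc x
        have h2 := hosc y
        have h3 : |u x - u y| ≤ Hu * D ^ γ := by
          rw [hdD, dist_eq_norm]; exact hHo x y
        have hωD : ω ≤ 3 * Hu * D ^ γ := by
          have s5 := MHE.rpow_helper5 hγ0 hγ1' hh
          have s6 := MHE.rpow_helper6 (D := D) hγ0 hh hcase.le
          calc ω = Hu * (3 * h) ^ γ := rfl
            _ ≤ Hu * (3 * h ^ γ) := mul_le_mul_of_nonneg_left s5 hHu0
            _ ≤ Hu * (3 * D ^ γ) := by
                apply mul_le_mul_of_nonneg_left ?_ hHu0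
                linarith
            _ = 3 * Hu * D ^ γ := by ring
        have tri : |F x - F y| ≤ |F x - u x| + |u x - u y| + |F y - u y| := by
          have : F x - F y = (F x - u x) + (u x - u y) - (F y - u y) := by ring
          rw [this]
          refine (abs_sub _ _).trans ?_
          gcongr
          exact abs_add_le _ _
        have : 0 ≤ K * CL * Hu * D ^ γ := by positivity
        nlinarith
    have hsemiF0 : 0 ≤ (3 * K * CL + 7) * Hu := mul_nonneg (by linarith) hHu0
    constructor
    · exact ⟨⟨Mu, hFb⟩, ⟨(3 * K * CL + 7) * Hu, hsemiF⟩⟩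
    · have hs1 : supNorm F ≤ Mu := MHE.supNorm_le hFb
      have hs2 : holderSemi γ F ≤ (3 * K * CL + 7) * Hu :=
        MHE.holderSemi_le hsemiF0 hsemiF
      have hgoal : supNorm F + holderSemi γ F ≤ (3 * K * CL + 20) * (Mu + Hu) := by
        nlinarith [mul_nonneg (mul_nonneg (mul_pos hK hCL).le hMu0) (by norm_num : (0:ℝ) ≤ 3),
          mul_nonneg (mul_pos hK hCL).le hHu0]
      exact hgoal
  · -- C¹ approximation
    intro u hC1 hbb
    obtain ⟨M, hM⟩ := hbb
    have hfb : ∃ M : ℝ, ∀ x : Euc d, ‖fderiv ℝ u x‖ ≤ M := ⟨M, fun x => (hM x).2⟩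
    have hub : ∃ M : ℝ, ∀ x : Euc d, |u x| ≤ M := ⟨M, fun x => (hM x).1⟩
    have hGu0 : 0 ≤ gradSup u := MHE.gradSup_nonneg hfb
    have hMu0 : 0 ≤ supNorm u := MHE.supNorm_nonneg hub
    set Gu := gradSup u with hGud
    have hlip : ∀ x y, |u x - u y| ≤ Gu * ‖x - y‖ := MHE.lip_of_C1 hC1 hfb
    set ω := Gu * (3 * h) with hωd
    have hω0 : 0 ≤ ω := by
      have : (0:ℝ) ≤ 3 * h := by linarith
      exact mul_nonneg hGu0 this
    have hmod : ∀ (p : ↥G) (z : Euc d), dist z ↑p ≤ 3 * h → |u ↑p - u z| ≤ ω := by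
      intro p z hpz
      refine (hlip ↑p z).trans ?_
      rw [hωd]
      apply mul_le_mul_of_nonneg_left ?_ hGu0
      rw [← dist_eq_norm, dist_comm]
      exact hpz
    set F := MHE.ext lam h G (fun p => u ↑p) with hFd
    have hosc : ∀ x, |F x - u x| ≤ ω :=
      fun x => MHE.ext_osc hh hl hl1 hsep hne hdense u hmod x
    have hγ1m : (0:ℝ) < h ^ ((1:ℝ) - γ) := Real.rpow_pos_of_pos hh _
    have hhγ : h ≤ h ^ ((1:ℝ) - γ) := by
      have e2 : h = h ^ γ * h ^ ((1:ℝ) - γ) := by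
        rw [← Real.rpow_add hh]; norm_num
      have : h ^ γ ≤ 1 := Real.rpow_le_one hh.le hh1 hγ0.le
      calc h = h ^ γ * h ^ ((1:ℝ) - γ) := e2
        _ ≤ 1 * h ^ ((1:ℝ) - γ) := mul_le_mul_of_nonneg_right this hγ1m.le
        _ = h ^ ((1:ℝ) - γ) := one_mul _
    have hsup : ∀ x, |F x - u x| ≤ 3 * Gu * h ^ ((1:ℝ) - γ) := by
      intro x
      refine (hosc x).trans ?_
      rw [hωd]
      calc Gu * (3 * h) = 3 * Gu * h := by ring
        _ ≤ 3 * Gu * h ^ ((1:ℝ) - γ) := by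
            apply mul_le_mul_of_nonneg_left hhγ (by linarith)
    have hsemiD : ∀ x y, |(F x - u x) - (F y - u y)|
        ≤ (3 * K * CL + 7) * Gu * h ^ ((1:ℝ) - γ) * ‖x - y‖ ^ γ := by
      intro x y
      rw [← dist_eq_norm]
      set D := dist x y with hdD
      have hD0 : 0 ≤ D := dist_nonneg
      have hDγ : 0 ≤ D ^ γ := Real.rpow_nonneg hD0 γ
      rcases le_or_gt D h with hcase | hcase
      · have hp := MHE.ext_pair hh hl hl1 hsep hne hdense u hmod hcase
        have hud : |u x - u y| ≤ Gu * D := by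
          rw [hdD, dist_eq_norm]; exact hlip x y
        have e : K * (CL / h) * ω * D = 3 * K * CL * Gu * D := by
          rw [hωd]; field_simp
        have tri : |(F x - u x) - (F y - u y)| ≤ |F x - F y| + |u x - u y| := by
          have : (F x - u x) - (F y - u y) = (F x - F y) - (u x - u y) := by ring
          rw [this]
          exact abs_sub _ _
        have hDle : D ≤ D ^ γ * h ^ ((1:ℝ) - γ) :=
          MHE.rpow_helper3 hγ0 hγ1' hh hD0 hcase
        have step : |(F x - u x) - (F y - u y)| ≤ (3 * K * CL + 1) * Gu * D := by
          rw [e] at hp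
          calc |(F x - u x) - (F y - u y)| ≤ |F x - F y| + |u x - u y| := tri
            _ ≤ 3 * K * CL * Gu * D + Gu * D := add_le_add hp hud
            _ = (3 * K * CL + 1) * Gu * D := by ring
        refine step.trans ?_
        calc (3 * K * CL + 1) * Gu * D
            ≤ (3 * K * CL + 1) * Gu * (D ^ γ * h ^ ((1:ℝ) - γ)) := by
              apply mul_le_mul_of_nonneg_left hDle
              apply mul_nonneg ?_ hGu0
              linarith
          _ = (3 * K * CL + 1) * Gu * h ^ ((1:ℝ) - γ) * D ^ γ := by ring
          _ ≤ (3 * K * CL + 7) * Gu * h ^ ((1:ℝ) - γ) * D ^ γ := by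
              apply mul_le_mul_of_nonneg_right ?_ hDγ
              have hx : 0 ≤ Gu * h ^ ((1:ℝ) - γ) := mul_nonneg hGu0 hγ1m.le
              nlinarith [hx]
      · have h1 := hosc x
        have h2 := hosc y
        have tri : |(F x - u x) - (F y - u y)| ≤ ω + ω := by
          refine (abs_sub _ _).trans ?_
          exact add_le_add h1 h2
        have hωD : ω ≤ 3 * Gu * (D ^ γ * h ^ ((1:ℝ) - γ)) := by
          have h4 := MHE.rpow_helper4 (γ := γ) (h := h) (D := D) hγ0 hh hcase.le
          calc ω = 3 * Gu * h := by rw [hωd]; ring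
            _ ≤ 3 * Gu * (D ^ γ * h ^ ((1:ℝ) - γ)) := by
                apply mul_le_mul_of_nonneg_left h4 (by linarith)
        refine tri.trans ?_
        have hKCL : 0 ≤ 3 * K * CL * (Gu * (h ^ ((1:ℝ) - γ) * D ^ γ)) :=
          mul_nonneg h3KCL.le (mul_nonneg hGu0 (mul_nonneg hγ1m.le hDγ))
        nlinarith [hKCL, hωD]
    have hsemiD0 : 0 ≤ (3 * K * CL + 7) * Gu * h ^ ((1:ℝ) - γ) := by
      apply mul_nonneg ?_ hγ1m.le
      apply mul_nonneg ?_ hGu0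
      linarith
    constructor
    · exact ⟨⟨ω, hosc⟩, ⟨(3 * K * CL + 7) * Gu * h ^ ((1:ℝ) - γ), hsemiD⟩⟩
    · have hs1 : supNorm (fun x => F x - u x) ≤ 3 * Gu * h ^ ((1:ℝ) - γ) :=
        MHE.supNorm_le hsup
      have hs2 : holderSemi γ (fun x => F x - u x)
          ≤ (3 * K * CL + 7) * Gu * h ^ ((1:ℝ) - γ) :=
        MHE.holderSemi_le hsemiD0 hsemiD
      have hgoal : supNorm (fun x => F x - u x) + holderSemi γ (fun x => F x - u x)
          ≤ (3 * K * CL + 20) * h ^ ((1:ℝ) - γ) * (supNorm u + Gu) := by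
        nlinarith [mul_nonneg (mul_nonneg (mul_pos hK hCL).le hGu0) hγ1m.le,
          mul_nonneg (mul_nonneg (mul_pos hK hCL).le hMu0) hγ1m.le,
          mul_nonneg hMu0 hγ1m.le, mul_nonneg hGu0 hγ1m.le]
      exact hgoal

end
end

section
/- Let E be a real normed vector space, X a nonempty set, and ℒ a nonempty family of bounded linear operators from E to the space ℓ^∞(X) of bounded real-valued functions on X, with sup_{L ∈ ℒ} ‖L‖ < ∞. Define the extremal operators M⁺(φ)(x) = sup_{L ∈ ℒ} L(φ)(x) and M⁻(φ)(x) = inf_{L ∈ ℒ} L(φ)(x). Suppose I : E → ℓ^∞(X) satisfies the extremal inequalities M⁻(u − v)(x) ≤ I(u)(x) − I(v)(x) ≤ M⁺(u − v)(x) for all u, v ∈ E and x ∈ X. If I is Fréchet differentiable at some u ∈ E with derivative DI_u (a bounded linear map from E to ℓ^∞(X)), then for every φ ∈ E and every x ∈ X: M⁻(φ)(x) ≤ DI_u(φ)(x) ≤ M⁺(φ)(x). -/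
/-- if `I : E → ℓ^∞(X)` satisfies the extremal inequalities
`M⁻(u-v)(x) ≤ I(u)(x) - I(v)(x) ≤ M⁺(u-v)(x)` for a uniformly bounded nonempty family
`ℒ` of bounded linear operators into `ℓ^∞(X)`, and `I` is Fréchet differentiable at `u`
(with respect to the sup norm on `ℓ^∞(X)`) with derivative `DI`, then
`M⁻(φ)(x) ≤ DI(φ)(x) ≤ M⁺(φ)(x)` for all `φ ∈ E` and `x ∈ X`. -/
theorem extremal_bounds_frechet_derivative
    (E : Type*) [NormedAddCommGroup E] [NormedSpace ℝ E]
    (X : Type*) [Nonempty X]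
    (ℒ : Set (E →ₗ[ℝ] (X → ℝ))) (hne : ℒ.Nonempty)
    (Λ : ℝ) (hΛ : ∀ L ∈ ℒ, ∀ (φ : E) (x : X), |L φ x| ≤ Λ * ‖φ‖)
    (I : E → X → ℝ)
    (hExt : ∀ (u v : E) (x : X),
      sInf {r : ℝ | ∃ L ∈ ℒ, r = L (u - v) x} ≤ I u x - I v x ∧
      I u x - I v x ≤ sSup {r : ℝ | ∃ L ∈ ℒ, r = L (u - v) x})
    (u : E) (DI : E →ₗ[ℝ] (X → ℝ))
    (hDIbdd : ∃ K : ℝ, ∀ (φ : E) (x : X), |DI φ x| ≤ K * ‖φ‖)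
    (hdiff : ∀ ε > (0 : ℝ), ∃ δ > (0 : ℝ), ∀ φ : E, ‖φ‖ < δ → ∀ x : X,
      |I (u + φ) x - I u x - DI φ x| ≤ ε * ‖φ‖) :
    ∀ (φ : E) (x : X),
      sInf {r : ℝ | ∃ L ∈ ℒ, r = L φ x} ≤ DI φ x ∧
      DI φ x ≤ sSup {r : ℝ | ∃ L ∈ ℒ, r = L φ x} := by
  intro φ x
  set S : Set ℝ := {r : ℝ | ∃ L ∈ ℒ, r = L φ x} with hS
  obtain ⟨L₀, hL₀⟩ := hne
  have hSne : S.Nonempty := ⟨L₀ φ x, L₀, hL₀, rfl⟩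
  have hbddA : BddAbove S := by
    refine ⟨Λ * ‖φ‖, ?_⟩
    rintro r ⟨L, hL, rfl⟩
    exact (abs_le.mp (hΛ L hL φ x)).2
  have hbddB : BddBelow S := by
    refine ⟨-(Λ * ‖φ‖), ?_⟩
    rintro r ⟨L, hL, rfl⟩
    exact (abs_le.mp (hΛ L hL φ x)).1
  -- key: for every ε > 0, the bounds hold up to ε
  have key : ∀ ε > (0 : ℝ), sInf S - ε ≤ DI φ x ∧ DI φ x ≤ sSup S + ε := by
    intro ε hε
    have hε' : ε / (‖φ‖ + 1) > 0 := div_pos hε (by positivity)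
    obtain ⟨δ, hδ, hδ'⟩ := hdiff (ε / (‖φ‖ + 1)) hε'
    -- choose t > 0 with t * ‖φ‖ < δ
    set t : ℝ := δ / (2 * (‖φ‖ + 1)) with ht
    have ht0 : 0 < t := by positivity
    have htφ : ‖t • φ‖ < δ := by
      rw [norm_smul, Real.norm_eq_abs, abs_of_pos ht0]
      calc t * ‖φ‖ ≤ t * (‖φ‖ + 1) := by nlinarith [norm_nonneg φ]
        _ = δ / 2 := by rw [ht, div_mul_eq_mul_div, mul_div_mul_right _ _ (by positivity : (‖φ‖ + 1) ≠ 0)]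
        _ < δ := by linarith
    have hdif := hδ' (t • φ) htφ x
    have hsub : (u + t • φ) - u = t • φ := by abel
    have hExt' := hExt (u + t • φ) u x
    rw [hsub] at hExt'
    have hDIt : DI (t • φ) x = t * DI φ x := by
      rw [map_smul]; rfl
    -- upper: sSup {L (t•φ) x} ≤ t * sSup S
    have hupper : sSup {r : ℝ | ∃ L ∈ ℒ, r = L (t • φ) x} ≤ t * sSup S := by
      apply csSup_le
      · exact ⟨L₀ (t • φ) x, L₀, hL₀, rfl⟩
      · rintro r ⟨L, hL, rfl⟩
        have : L (t • φ) x = t * L φ x := by rw [map_smul]; rfl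
        rw [this]
        exact mul_le_mul_of_nonneg_left (le_csSup hbddA ⟨L, hL, rfl⟩) ht0.le
    have hlower : t * sInf S ≤ sInf {r : ℝ | ∃ L ∈ ℒ, r = L (t • φ) x} := by
      apply le_csInf
      · exact ⟨L₀ (t • φ) x, L₀, hL₀, rfl⟩
      · rintro r ⟨L, hL, rfl⟩
        have : L (t • φ) x = t * L φ x := by rw [map_smul]; rfl
        rw [this]
        exact mul_le_mul_of_nonneg_left (csInf_le hbddB ⟨L, hL, rfl⟩) ht0.le
    have hnorm : ‖t • φ‖ = t * ‖φ‖ := by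
      rw [norm_smul, Real.norm_eq_abs, abs_of_pos ht0]
    rw [hnorm, hDIt] at hdif
    have habs := abs_le.mp hdif
    have heps : ε / (‖φ‖ + 1) * (t * ‖φ‖) ≤ t * ε := by
      rw [div_mul_eq_mul_div, div_le_iff₀ (by positivity)]
      nlinarith [norm_nonneg φ, ht0.le, hε.le]
    constructor
    · have h1 : t * sInf S ≤ I (u + t • φ) x - I u x := le_trans hlower hExt'.1
      have h2 : I (u + t • φ) x - I u x - t * DI φ x ≤ ε / (‖φ‖ + 1) * (t * ‖φ‖) := habs.2
      have : t * sInf S - t * ε ≤ t * DI φ x := by nlinarith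
      have := (mul_le_mul_iff_right₀ ht0).mp (by linarith [this] : t * (sInf S - ε) ≤ t * DI φ x)
      linarith
    · have h1 : I (u + t • φ) x - I u x ≤ t * sSup S := le_trans hExt'.2 hupper
      have h2 : -(ε / (‖φ‖ + 1) * (t * ‖φ‖)) ≤ I (u + t • φ) x - I u x - t * DI φ x := habs.1
      have : t * DI φ x ≤ t * sSup S + t * ε := by nlinarith
      have := (mul_le_mul_iff_right₀ ht0).mp (by linarith [this] : t * DI φ x ≤ t * (sSup S + ε))
      linarith
  constructor
  · by_contra h
    push_neg at h
    obtain ⟨h1, _⟩ := key ((sInf S - DI φ x) / 2) (by linarith)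
    linarith
  · by_contra h
    push_neg at h
    obtain ⟨_, h2⟩ := key ((DI φ x - sSup S) / 2) (by linarith)
    linarith
end
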